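/- Let p be an odd prime and m, k positive integers with m/gcd(m,k) odd. Then the set of nonzero values of x ↦ x^(p^k+1) on F_{p^m} equals the set of nonzero squares of F_{p^m}. -/

import Mathlib

lemma gcd_key (p m k : ℕ) (hp1 : 1 < p) (hodd : Odd p)
    (hm : 0 < m) (hk : 0 < k) (h : Odd (m / Nat.gcd m k)) :
    Nat.gcd (p ^ k + 1) (p ^ m - 1) = 2 := by
  set d := Nat.gcd (p ^ k + 1) (p ^ m - 1) with hd
  have hda : d ∣ p ^ k + 1 := Nat.gcd_dvd_left _ _
  have hdb : d ∣ p ^ m - 1 := Nat.gcd_dvd_right _ _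
  have h2a : 2 ∣ p ^ k + 1 := (hodd.pow).add_one.two_dvd
  have h2b : 2 ∣ p ^ m - 1 := (Nat.Odd.sub_odd (hodd.pow) odd_one).two_dvd
  have h2d : 2 ∣ d := Nat.dvd_gcd h2a h2b
  refine Nat.dvd_antisymm ?_ h2d
  -- work in ZMod d
  have hpm1 : 1 ≤ p ^ m := Nat.one_le_pow _ _ (by omega)
  have hA : (p : ZMod d) ^ m = 1 := by
    have : ((p ^ m - 1 : ℕ) : ZMod d) = 0 := (ZMod.natCast_eq_zero_iff _ _).mpr hdb
    rw [Nat.cast_sub hpm1, Nat.cast_pow, Nat.cast_one, sub_eq_zero] at this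
    exact this
  have hB : (p : ZMod d) ^ k = -1 := by
    have : ((p ^ k + 1 : ℕ) : ZMod d) = 0 := (ZMod.natCast_eq_zero_iff _ _).mpr hda
    rw [Nat.cast_add, Nat.cast_pow, Nat.cast_one] at this
    linear_combination this
  set e := orderOf ((p : ZMod d)) with he
  have hem : e ∣ m := orderOf_dvd_of_pow_eq_one hA
  have he2k : e ∣ 2 * k := by
    apply orderOf_dvd_of_pow_eq_one
    rw [mul_comm, pow_mul, hB]
    ring
  have heg : e ∣ Nat.gcd m (2 * k) := Nat.dvd_gcd hem he2k
  -- gcd m (2k) divides k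
  set g := Nat.gcd m k with hg
  have hgpos : 0 < g := Nat.gcd_pos_of_pos_left _ hm
  have h1 : Nat.gcd m (2 * k) ∣ Nat.gcd m (2 * g) := by
    refine Nat.dvd_gcd (Nat.gcd_dvd_left _ _) ?_
    have : Nat.gcd m (2 * k) ∣ Nat.gcd (2 * m) (2 * k) :=
      Nat.dvd_gcd ((Nat.gcd_dvd_left _ _).trans (dvd_mul_left m 2)) (Nat.gcd_dvd_right _ _)
    rwa [Nat.gcd_mul_left] at this
  have h2 : Nat.gcd m (2 * g) = g := by
    have hmg : g * (m / g) = m := Nat.mul_div_cancel' (Nat.gcd_dvd_left _ _)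
    have hcop : Nat.gcd (m / g) 2 = 1 := by
      have : ¬ 2 ∣ (m / g) := by
        have := Nat.odd_iff.mp h; omega
      exact Nat.Coprime.gcd_eq_one (Nat.coprime_comm.mp (Nat.prime_two.coprime_iff_not_dvd.mpr this))
    calc Nat.gcd m (2 * g) = Nat.gcd (g * (m / g)) (g * 2) := by rw [hmg, mul_comm 2 g]
    _ = g * Nat.gcd (m / g) 2 := Nat.gcd_mul_left _ _ _
    _ = g := by rw [hcop, mul_one]
  rw [h2] at h1
  have hek : e ∣ k := (heg.trans h1).trans (Nat.gcd_dvd_right m k)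
  have hpk1 : (p : ZMod d) ^ k = 1 := orderOf_dvd_iff_pow_eq_one.mp hek
  have h20 : ((2 : ℕ) : ZMod d) = 0 := by
    push_cast
    rw [hpk1] at hB
    linear_combination hB
  exact (ZMod.natCast_eq_zero_iff _ _).mp h20

theorem stmt_13 (p m k : ℕ) (hp : p.Prime) (hodd : Odd p)
    (hm : 0 < m) (hk : 0 < k) (h : Odd (m / Nat.gcd m k))
    (F : Type*) [Field F] [Fintype F] (hF : Fintype.card F = p ^ m) :
    ∀ y : F, y ≠ 0 → ((∃ x : F, x ^ (p ^ k + 1) = y) ↔ IsSquare y) := by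
  classical
  intro y hy
  constructor
  · rintro ⟨x, rfl⟩
    obtain ⟨c, hc⟩ := (hodd.pow (n := k)).add_one
    exact ⟨x ^ c, by rw [← pow_add, ← hc]⟩
  · rintro ⟨z, rfl⟩
    have hz : z ≠ 0 := by rintro rfl; simp at hy
    set zu : Fˣ := Units.mk0 z hz with hzu
    set a := p ^ k + 1 with ha
    set b := p ^ m - 1 with hb
    have hcard : Fintype.card Fˣ = b := by rw [Fintype.card_units, hF]
    have hzb : zu ^ ((b : ℕ) : ℤ) = 1 := by
      rw [zpow_natCast, ← hcard, pow_card_eq_one]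
    have hgcd : Nat.gcd a b = 2 := gcd_key p m k hp.one_lt hodd hm hk h
    have hbez : (2 : ℤ) = a * Nat.gcdA a b + b * Nat.gcdB a b := by
      have hb2 := Nat.gcd_eq_gcd_ab a b
      rw [hgcd] at hb2
      exact_mod_cast hb2
    set A := Nat.gcdA a b
    set B := Nat.gcdB a b
    refine ⟨((zu ^ A : Fˣ) : F), ?_⟩
    have key : (zu ^ A) ^ (a : ℕ) = zu * zu := by
      rw [← zpow_natCast (zu ^ A) a, ← zpow_mul]
      have : A * (a : ℤ) = 2 - (b : ℤ) * B := by linarith [hbez]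
      rw [this, zpow_sub, zpow_mul, hzb, one_zpow]
      simp [zpow_two, pow_two]
    calc ((zu ^ A : Fˣ) : F) ^ (p ^ k + 1) = (((zu ^ A) ^ (a : ℕ) : Fˣ) : F) := by
          rw [Units.val_pow_eq_pow_val]
    _ = z * z := by rw [key]; simp [hzu]
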